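/- arXiv:2410.03975 — 2 statements merged into one kernel-verified Lean document; each statement's English description precedes it below -/
import Mathlib

section
/- Let $k \geq 1$ and $c_k \geq 2$ be integers, and define $u_k(x,y) = \sum_{j=1}^{2c_k - 1} b_{k,j} \sin(\tfrac{\pi}{2^k} j x) e^{\tfrac{\pi}{2^k} j y}$ with coefficients determined by $\sum_j (-1)^{(j-1)/2} b_{k,j} x^j = P_{c_k}(x)$. Then the zeros of $y \mapsto u_k(2^{k-1}, y)$ are exactly the points $y_{k,j} = \tfrac{2^{k-1}}{\pi} \log(1 - \tfrac{1}{j})$ for $2 \leq j \leq c_k$, and at each such zero $\tfrac{\partial u_k}{\partial y}(2^{k-1}, y_{k,j}) \neq 0$. -/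
open Real Finset

lemma sin_odd_half (m : ℕ) : Real.sin (Real.pi/2 * (2*(m:ℝ)+1)) = (-1)^m := by
  induction m with
  | zero => simp
  | succ n ih =>
    have h : Real.pi/2 * (2*((n:ℝ)+1)+1) = Real.pi/2 * (2*(n:ℝ)+1) + Real.pi := by ring
    push_cast
    rw [h, Real.sin_add_pi, ih]; ring

theorem stmt6 (k c : ℕ) (hk : 1 ≤ k) (hc : 2 ≤ c) (b : ℕ → ℝ)
    (hb : ∀ x : ℝ, ∑ j ∈ Finset.Icc 1 (2 * c - 1), (-1 : ℝ) ^ ((j - 1) / 2) * b j * x ^ j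
      = x * ∏ j ∈ Finset.Icc 2 c, (x ^ 2 - 1 + 1 / (j : ℝ)))
    (hb0 : ∀ j, Even j → b j = 0)
    (u : ℝ → ℝ → ℝ)
    (hu : ∀ x y : ℝ, u x y = ∑ j ∈ Finset.Icc 1 (2 * c - 1),
      b j * Real.sin (Real.pi / 2 ^ k * j * x) * Real.exp (Real.pi / 2 ^ k * j * y)) :
    {y : ℝ | u (2 ^ (k - 1)) y = 0}
      = (fun j : ℕ => 2 ^ (k - 1) / Real.pi * Real.log (1 - 1 / (j : ℝ))) '' (Set.Icc 2 c) ∧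
    ∀ j : ℕ, j ∈ Set.Icc 2 c →
      deriv (fun y => u (2 ^ (k - 1)) y)
        (2 ^ (k - 1) / Real.pi * Real.log (1 - 1 / (j : ℝ))) ≠ 0 := by
  have hpi := Real.pi_pos
  have h2k : (2:ℝ)^k = 2 * 2^(k-1) := by
    rw [← pow_succ']; congr 1; omega
  have h2k1 : (0:ℝ) < 2^(k-1) := by positivity
  -- representation
  have hrep : ∀ y : ℝ, u (2 ^ (k-1)) y = Real.exp (Real.pi / 2 ^ k * y) *
      ∏ j ∈ Finset.Icc 2 c, (Real.exp (Real.pi / 2 ^ k * y) ^ 2 - 1 + 1 / (j : ℝ)) := by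
    intro y
    rw [hu, ← hb (Real.exp (Real.pi / 2 ^ k * y))]
    refine Finset.sum_congr rfl fun j hj => ?_
    rw [← Real.exp_nat_mul]
    rcases Nat.even_or_odd j with he | ho
    · rw [hb0 j he]; ring
    · obtain ⟨m, rfl⟩ := ho
      have h1 : Real.pi / 2^k * (↑(2*m+1)) * (2:ℝ)^(k-1) = Real.pi/2 * (2*(m:ℝ)+1) := by
        push_cast
        rw [h2k]
        field_simp
      have h2 : (2*m+1-1)/2 = m := by omega
      rw [h1, h2, sin_odd_half m]
      rw [show Real.pi/2^k * (↑(2*m+1)) * y = (↑(2*m+1) : ℝ) * (Real.pi/2^k * y) by ring]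
      ring
  -- positivity of 1 - 1/j for j ≥ 2
  have hapos : ∀ j : ℕ, 2 ≤ j → (0:ℝ) < 1 - 1/(j:ℝ) := by
    intro j hj
    have h2j : (2:ℝ) ≤ j := by exact_mod_cast hj
    have : 1/(j:ℝ) ≤ 1/2 := by
      apply one_div_le_one_div_of_le <;> linarith
    linarith
  -- key exponential identity at y_j
  have hexp2 : ∀ j : ℕ, 2 ≤ j →
      Real.exp (Real.pi / 2^k * (2^(k-1)/Real.pi * Real.log (1 - 1/(j:ℝ)))) ^ 2
        = 1 - 1/(j:ℝ) := by
    intro j hj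
    have harg : Real.pi / 2^k * (2^(k-1)/Real.pi * Real.log (1 - 1/(j:ℝ)))
        = Real.log (1 - 1/(j:ℝ)) / 2 := by
      rw [h2k]; field_simp
    rw [harg, ← Real.exp_nat_mul]
    push_cast
    rw [show (2:ℝ) * (Real.log (1 - 1/(j:ℝ)) / 2) = Real.log (1 - 1/(j:ℝ)) by ring]
    exact Real.exp_log (hapos j hj)
  constructor
  · -- zero set
    ext y
    simp only [Set.mem_setOf_eq, hrep y, Set.mem_image, Set.mem_Icc]
    constructor
    · intro h
      have hepos := Real.exp_pos (Real.pi / 2^k * y)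
      have hprod : ∏ j ∈ Finset.Icc 2 c,
          (Real.exp (Real.pi / 2 ^ k * y) ^ 2 - 1 + 1 / (j : ℝ)) = 0 := by
        rcases mul_eq_zero.1 h with h' | h'
        · exact absurd h' (ne_of_gt hepos)
        · exact h'
      obtain ⟨j, hj, hj0⟩ := Finset.prod_eq_zero_iff.1 hprod
      rw [Finset.mem_Icc] at hj
      refine ⟨j, ⟨hj.1, hj.2⟩, ?_⟩
      have hE : Real.exp (Real.pi / 2 ^ k * y) ^ 2 = 1 - 1/(j:ℝ) := by linarith
      have hlog : 2 * (Real.pi / 2^k * y) = Real.log (1 - 1/(j:ℝ)) := by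
        rw [← Real.log_exp (2 * (Real.pi / 2^k * y))]
        congr 1
        rw [← hE, ← Real.exp_nat_mul]
        push_cast
        ring_nf
      rw [← hlog, h2k]
      field_simp
    · rintro ⟨j, ⟨hj2, hjc⟩, rfl⟩
      apply mul_eq_zero_of_right
      apply Finset.prod_eq_zero (Finset.mem_Icc.2 ⟨hj2, hjc⟩)
      rw [hexp2 j hj2]
      ring
  · -- derivative nonzero
    rintro j₀ ⟨hj₀2, hj₀c⟩
    set L := Real.log (1 - 1/(j₀:ℝ)) with hL
    set y₀ : ℝ := 2^(k-1)/Real.pi * L with hy₀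
    set C : ℝ := Real.pi / 2^k with hC
    have hCpos : 0 < C := by positivity
    set t₀ : ℝ := Real.exp (C * y₀) with ht₀
    have ht₀pos : 0 < t₀ := Real.exp_pos _
    have ht2 : t₀ ^ 2 = 1 - 1/(j₀:ℝ) := hexp2 j₀ hj₀2
    have hE : HasDerivAt (fun y => Real.exp (C * y)) (t₀ * C) y₀ := by
      simpa [mul_comm] using ((hasDerivAt_id y₀).const_mul C).exp
    have hfac : ∀ i ∈ Finset.Icc 2 c,
        HasDerivAt (fun y => Real.exp (C * y) ^ 2 - 1 + 1/(i:ℝ))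
          ((2:ℝ) * t₀ ^ 1 * (t₀ * C)) y₀ := by
      intro i _
      exact ((hE.pow 2).sub_const 1).add_const _
    have hprodD := HasDerivAt.fun_finsetProd hfac
    have hF := hE.fun_mul hprodD
    have hfun : (fun y => u (2 ^ (k-1)) y)
        = fun y => Real.exp (C * y) * ∏ i ∈ Finset.Icc 2 c,
            (Real.exp (C * y) ^ 2 - 1 + 1/(i:ℝ)) := by
      funext y
      rw [hrep y]
    rw [hfun]
    have hderiv := hF.deriv
    have hj₀mem : j₀ ∈ Finset.Icc 2 c := Finset.mem_Icc.2 ⟨hj₀2, hj₀c⟩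
    have hval : ∀ i : ℕ, Real.exp (C * y₀) ^ 2 - 1 + 1/(i:ℝ) = 1/(i:ℝ) - 1/(j₀:ℝ) := by
      intro i
      rw [← ht₀, ht2]; ring
    have hP0 : ∏ i ∈ Finset.Icc 2 c, (Real.exp (C * y₀) ^ 2 - 1 + 1/(i:ℝ)) = 0 := by
      apply Finset.prod_eq_zero hj₀mem
      rw [hval]; ring
    have hsum : ∑ i ∈ Finset.Icc 2 c,
        (∏ l ∈ (Finset.Icc 2 c).erase i, (Real.exp (C * y₀) ^ 2 - 1 + 1/(l:ℝ)))
          • ((2:ℝ) * t₀ ^ 1 * (t₀ * C))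
        = (∏ l ∈ (Finset.Icc 2 c).erase j₀, (Real.exp (C * y₀) ^ 2 - 1 + 1/(l:ℝ)))
          * ((2:ℝ) * t₀ ^ 1 * (t₀ * C)) := by
      rw [Finset.sum_eq_single_of_mem j₀ hj₀mem]
      · rw [smul_eq_mul]
      · intro i hi hne
        rw [smul_eq_mul]
        apply mul_eq_zero_of_left
        apply Finset.prod_eq_zero (Finset.mem_erase.2 ⟨hne.symm, hj₀mem⟩)
        rw [hval]; ring
    have hPne : ∏ l ∈ (Finset.Icc 2 c).erase j₀,
        (Real.exp (C * y₀) ^ 2 - 1 + 1/(l:ℝ)) ≠ 0 := by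
      rw [Finset.prod_ne_zero_iff]
      intro i hi
      rw [Finset.mem_erase, Finset.mem_Icc] at hi
      rw [hval]
      have hi0 : (i:ℝ) ≠ 0 := by
        have : 2 ≤ i := hi.2.1
        positivity
      have hj0 : (j₀:ℝ) ≠ 0 := by positivity
      intro habs
      rw [sub_eq_zero] at habs
      field_simp at habs
      exact hi.1 (by exact_mod_cast habs.symm)
    -- conclude
    have : deriv (fun y => Real.exp (C * y) * ∏ i ∈ Finset.Icc 2 c,
        (Real.exp (C * y) ^ 2 - 1 + 1/(i:ℝ))) y₀
        = t₀ * ((∏ l ∈ (Finset.Icc 2 c).erase j₀,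
            (Real.exp (C * y₀) ^ 2 - 1 + 1/(l:ℝ))) * ((2:ℝ) * t₀ ^ 1 * (t₀ * C))) := by
      rw [hderiv, hP0, hsum, ← ht₀]
      ring
    rw [this]
    apply mul_ne_zero (ne_of_gt ht₀pos)
    apply mul_ne_zero hPne
    positivity
end

section
/- For all $\varepsilon > 0$ and any sequence of positive integers $\{n_i\}_{i \geq 1}$, there exists a holomorphic map $f: \mathbb{C}^2 \to \mathbb{C}^2$ and a constant $C > 0$ such that $\max_{B_r} |f| \leq C e^{r^{1+\varepsilon}}$ for all $r \geq 0$, and for every integer $k \geq 1$, $f$ has at least $\sum_{i=1}^{k} n_i$ isolated zeros inside $B_{2^k}$. -/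
open Complex Metric Finset Set
open scoped Real Topology

noncomputable section
namespace Stmt18

def g : ℂ → ℂ := fun z => Complex.exp ((2 * Real.pi) * z) - 1

def a (j : ℕ) : ℂ := (j : ℂ) * Complex.I

def E (j : ℕ) : ℂ → ℂ := dslope g (a j)

def P (N : ℕ) : ℂ → ℂ := fun w => ∏ m ∈ Finset.Icc 1 N, (w - 1 / (m : ℂ))

lemma hg_diff : Differentiable ℂ g :=
  (Complex.differentiable_exp.comp (differentiable_id.const_mul _)).sub_const 1

lemma hg_hasDeriv (z : ℂ) :
    HasDerivAt g ((2 * Real.pi) * Complex.exp ((2 * Real.pi) * z)) z := by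
  have h := (((hasDerivAt_id z).const_mul (2 * (Real.pi : ℂ))).cexp.sub_const 1)
  simp only [id] at h
  exact h.congr_deriv (by ring)

lemma hg_deriv (z : ℂ) : deriv g z = (2 * Real.pi) * Complex.exp ((2 * Real.pi) * z) :=
  (hg_hasDeriv z).deriv

lemma a_inj {j j' : ℕ} (h : a j = a j') : j = j' := by
  have := mul_right_cancel₀ Complex.I_ne_zero h
  exact_mod_cast this

lemma norm_a (j : ℕ) : ‖a j‖ = j := by
  simp [a]

lemma g_a (j : ℕ) : g (a j) = 0 := by
  have : (2 * (Real.pi : ℂ)) * a j = (j : ℤ) * (2 * Real.pi * Complex.I) := by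
    simp [a]; ring
  simp [g, this, Complex.exp_int_mul_two_pi_mul_I]

lemma deriv_g_a (j : ℕ) : deriv g (a j) = 2 * Real.pi := by
  have : (2 * (Real.pi : ℂ)) * a j = (j : ℤ) * (2 * Real.pi * Complex.I) := by
    simp [a]; ring
  rw [hg_deriv, this, Complex.exp_int_mul_two_pi_mul_I, mul_one]

lemma norm_g_le (z : ℂ) : ‖g z‖ ≤ 2 * Real.exp (2 * Real.pi * ‖z‖) := by
  have h1 : ‖Complex.exp ((2 * Real.pi) * z)‖ ≤ Real.exp (2 * Real.pi * ‖z‖) := by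
    rw [Complex.norm_exp]
    apply Real.exp_le_exp.2
    calc ((2 * (Real.pi:ℂ)) * z).re ≤ ‖(2 * (Real.pi:ℂ)) * z‖ := Complex.re_le_norm _
      _ = 2 * Real.pi * ‖z‖ := by
          rw [norm_mul]
          congr 1
          simp [Complex.norm_real]
          positivity
  calc ‖g z‖ ≤ ‖Complex.exp ((2 * Real.pi) * z)‖ + ‖(1:ℂ)‖ := norm_sub_le _ _
    _ ≤ Real.exp (2 * Real.pi * ‖z‖) + 1 := by simpa using h1
    _ ≤ 2 * Real.exp (2 * Real.pi * ‖z‖) := by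
        have := Real.one_le_exp (by positivity : (0:ℝ) ≤ 2 * Real.pi * ‖z‖)
        linarith

lemma norm_deriv_g_le (z : ℂ) : ‖deriv g z‖ ≤ 7 * Real.exp (2 * Real.pi * ‖z‖) := by
  rw [hg_deriv, norm_mul]
  have h1 : ‖Complex.exp ((2 * Real.pi) * z)‖ ≤ Real.exp (2 * Real.pi * ‖z‖) := by
    rw [Complex.norm_exp]
    apply Real.exp_le_exp.2
    calc ((2 * (Real.pi:ℂ)) * z).re ≤ ‖(2 * (Real.pi:ℂ)) * z‖ := Complex.re_le_norm _
      _ = 2 * Real.pi * ‖z‖ := by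
          rw [norm_mul]; congr 1; simp [Complex.norm_real]; positivity
  have h2 : ‖(2 * (Real.pi:ℂ))‖ ≤ 7 := by
    have : ‖(2 * (Real.pi:ℂ))‖ = 2 * Real.pi := by
      simp [Complex.norm_real]; positivity
    rw [this]; nlinarith [Real.pi_lt_d2]
  have h3 : (0:ℝ) ≤ ‖Complex.exp ((2 * Real.pi) * z)‖ := norm_nonneg _
  nlinarith [Real.exp_pos (2 * Real.pi * ‖z‖)]



lemma maxmod {F : ℂ → ℂ} (hF : Differentiable ℂ F) (c : ℂ) {K : ℝ} (hK : 0 ≤ K)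
    (hbd : ∀ z, 1 ≤ ‖z - c‖ → ‖F z‖ ≤ K * Real.exp (2 * Real.pi * ‖z‖)) (z : ℂ) :
    ‖F z‖ ≤ K * Real.exp (4 * Real.pi) * Real.exp (2 * Real.pi * ‖z‖) := by
  have hexp14 : (1:ℝ) ≤ Real.exp (4 * Real.pi) := Real.one_le_exp (by positivity)
  by_cases h : 1 ≤ ‖z - c‖
  · have := hbd z h
    have h2 : K * Real.exp (2 * Real.pi * ‖z‖) ≤ K * Real.exp (4 * Real.pi) * Real.exp (2 * Real.pi * ‖z‖) := by
      exact mul_le_mul_of_nonneg_right (le_mul_of_one_le_right hK hexp14)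
        (Real.exp_pos _).le
    linarith
  · push_neg at h
    have hz_ball : z ∈ Metric.ball c 1 := by
      rw [Metric.mem_ball, dist_eq_norm]; exact h
    have key : ‖F z‖ ≤ K * Real.exp (2 * Real.pi * (‖z‖ + 2)) := by
      apply Complex.norm_le_of_forall_mem_frontier_norm_le Metric.isBounded_ball
        hF.diffContOnCl
      · intro ζ hζ
        rw [frontier_ball c one_ne_zero] at hζ
        have hζ1 : ‖ζ - c‖ = 1 := by
          rw [mem_sphere_iff_norm] at hζ; exact hζ
        have hζn : ‖ζ‖ ≤ ‖z‖ + 2 := by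
          have h1 : ‖ζ‖ ≤ ‖ζ - c‖ + ‖c‖ := by
            simpa using norm_add_le (ζ - c) c
          have h2 : ‖c‖ ≤ ‖c - z‖ + ‖z‖ := by
            simpa using norm_add_le (c - z) z
          have h3 : ‖c - z‖ = ‖z - c‖ := norm_sub_rev _ _
          linarith
        calc ‖F ζ‖ ≤ K * Real.exp (2 * Real.pi * ‖ζ‖) := hbd ζ (le_of_eq hζ1.symm)
          _ ≤ K * Real.exp (2 * Real.pi * (‖z‖ + 2)) := by
              apply mul_le_mul_of_nonneg_left _ hK
              exact Real.exp_le_exp.2 (by nlinarith [Real.pi_pos])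
      · exact subset_closure hz_ball
    calc ‖F z‖ ≤ K * Real.exp (2 * Real.pi * (‖z‖ + 2)) := key
      _ = K * Real.exp (4 * Real.pi) * Real.exp (2 * Real.pi * ‖z‖) := by
          have he : Real.exp (2 * Real.pi * (‖z‖ + 2))
              = Real.exp (4 * Real.pi) * Real.exp (2 * Real.pi * ‖z‖) := by
            rw [← Real.exp_add]; ring_nf
          rw [he]; ring


lemma hE_diff (j : ℕ) : Differentiable ℂ (E j) := by
  have h := (Complex.differentiableOn_dslope (f := g) (c := a j) (s := Set.univ)
    Filter.univ_mem).2 hg_diff.differentiableOn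
  rw [← differentiableOn_univ]
  exact h

lemma E_ne {j : ℕ} {z : ℂ} (h : z ≠ a j) : E j z = g z / (z - a j) := by
  rw [E, dslope_of_ne g h, slope_def_field, g_a, sub_zero]

lemma E_self (j : ℕ) : E j (a j) = 2 * Real.pi := by
  rw [E, dslope_same, deriv_g_a]

lemma E_vanish {j j' : ℕ} (h : j' ≠ j) : E j (a j') = 0 := by
  rw [E_ne (fun hc => h (a_inj hc)), g_a, zero_div]

lemma Ebound (j : ℕ) (z : ℂ) :
    ‖E j z‖ ≤ 2 * Real.exp (4 * Real.pi) * Real.exp (2 * Real.pi * ‖z‖) := by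
  apply maxmod (hE_diff j) (a j) (by norm_num)
  intro z hz
  have hne : z ≠ a j := by
    intro hc; rw [hc] at hz; simp at hz; linarith
  rw [E_ne hne, norm_div]
  have h1 : ‖g z‖ / ‖z - a j‖ ≤ ‖g z‖ := by
    apply div_le_self (norm_nonneg _) hz
  exact h1.trans (norm_g_le z)

lemma hE'_diff (j : ℕ) : Differentiable ℂ (deriv (E j)) := by
  have h1 : AnalyticOnNhd ℂ (E j) Set.univ :=
    Complex.analyticOnNhd_univ_iff_differentiable.2 (hE_diff j)
  exact Complex.analyticOnNhd_univ_iff_differentiable.1 h1.deriv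

lemma E'bound (j : ℕ) (z : ℂ) :
    ‖deriv (E j) z‖ ≤ 9 * Real.exp (4 * Real.pi) * Real.exp (2 * Real.pi * ‖z‖) := by
  apply maxmod (hE'_diff j) (a j) (by norm_num)
  intro z hz
  have hne : z ≠ a j := by
    intro hc; rw [hc] at hz; simp at hz; linarith
  have hne0 : z - a j ≠ 0 := sub_ne_zero.2 hne
  -- deriv (E j) z = deriv (fun t => g t / (t - a j)) z
  have hev : E j =ᶠ[𝓝 z] fun t => g t / (t - a j) := by
    filter_upwards [isOpen_ne.mem_nhds hne] with t ht
    exact E_ne ht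
  have hd : HasDerivAt (fun t : ℂ => g t / (t - a j))
      ((deriv g z * (z - a j) - g z * 1) / (z - a j) ^ 2) z :=
    (hg_diff z).hasDerivAt.div ((hasDerivAt_id z).sub_const (a j)) hne0
  have hder : deriv (E j) z = (deriv g z * (z - a j) - g z * 1) / (z - a j) ^ 2 := by
    rw [hev.deriv_eq]; exact hd.deriv
  rw [hder, norm_div, norm_pow]
  set u := ‖z - a j‖ with hu
  set e := Real.exp (2 * Real.pi * ‖z‖) with he
  have he0 : 0 < e := Real.exp_pos _
  have hnum : ‖deriv g z * (z - a j) - g z * 1‖ ≤ 7 * e * u + 2 * e := by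
    calc ‖deriv g z * (z - a j) - g z * 1‖ ≤ ‖deriv g z * (z - a j)‖ + ‖g z * 1‖ :=
        norm_sub_le _ _
      _ ≤ 7 * e * u + 2 * e := by
          rw [norm_mul, norm_mul, norm_one, mul_one]
          have h1 := norm_deriv_g_le z
          have h2 := norm_g_le z
          have h3 : (0:ℝ) ≤ u := norm_nonneg _
          nlinarith [norm_nonneg (deriv g z)]
  have hu2 : (0:ℝ) < u ^ 2 := by positivity
  rw [div_le_iff₀ hu2]
  have hkey : 0 ≤ e * ((u - 1) * (9 * u + 2)) := by
    apply mul_nonneg he0.le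
    apply mul_nonneg (by linarith) (by linarith)
  nlinarith [hnum, norm_nonneg (deriv g z * (z - a j) - g z * 1)]


def P' (N : ℕ) : ℂ → ℂ := fun w =>
  ∑ m ∈ Finset.Icc 1 N, ∏ m' ∈ (Finset.Icc 1 N).erase m, (w - 1 / (m' : ℂ))

lemma hP_hasDeriv (N : ℕ) (w : ℂ) : HasDerivAt (P N) (P' N w) w := by
  have h := HasDerivAt.fun_finsetProd (u := Finset.Icc 1 N)
    (f := fun m (w : ℂ) => w - 1 / (m : ℂ)) (f' := fun _ => 1) (x := w)
    (fun i _ => (hasDerivAt_id w).sub_const _)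
  unfold P P'
  exact h.congr_deriv (by simp)

lemma hP_diff (N : ℕ) : Differentiable ℂ (P N) := fun w => (hP_hasDeriv N w).differentiableAt

lemma norm_sub_inv_le {m : ℕ} (hm : 1 ≤ m) {w : ℂ} {r : ℝ} (hw : ‖w‖ ≤ r) :
    ‖w - 1 / (m : ℂ)‖ ≤ r + 1 := by
  have h1 : ‖(1 : ℂ) / (m : ℂ)‖ ≤ 1 := by
    rw [norm_div, norm_one]
    rw [div_le_one (by exact_mod_cast Nat.cast_pos.2 hm : (0:ℝ) < ‖(m:ℂ)‖)]
    simp only [Complex.norm_natCast]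
    exact_mod_cast hm
  calc ‖w - 1 / (m : ℂ)‖ ≤ ‖w‖ + ‖(1:ℂ) / (m:ℂ)‖ := norm_sub_le _ _
    _ ≤ r + 1 := add_le_add hw h1

lemma norm_P_le (N : ℕ) {w : ℂ} {r : ℝ} (hw : ‖w‖ ≤ r) : ‖P N w‖ ≤ (r + 1) ^ N := by
  rw [P, norm_prod]
  calc ∏ m ∈ Finset.Icc 1 N, ‖w - 1 / (m:ℂ)‖ ≤ ∏ _m ∈ Finset.Icc 1 N, (r + 1) := by
        apply Finset.prod_le_prod (fun m _ => norm_nonneg _)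
        intro m hm
        exact norm_sub_inv_le (Finset.mem_Icc.1 hm).1 hw
    _ = (r + 1) ^ N := by rw [Finset.prod_const, Nat.card_Icc]; norm_num

lemma norm_P'_le (N : ℕ) {w : ℂ} {r : ℝ} (hr : 0 ≤ r) (hw : ‖w‖ ≤ r) :
    ‖P' N w‖ ≤ N * (r + 1) ^ N := by
  have hr1 : (1:ℝ) ≤ r + 1 := by linarith
  calc ‖P' N w‖ ≤ ∑ m ∈ Finset.Icc 1 N, ‖∏ m' ∈ (Finset.Icc 1 N).erase m, (w - 1/(m':ℂ))‖ :=
      norm_sum_le _ _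
    _ ≤ ∑ m ∈ Finset.Icc 1 N, (r + 1) ^ N := by
        apply Finset.sum_le_sum
        intro m hm
        rw [norm_prod]
        calc ∏ m' ∈ (Finset.Icc 1 N).erase m, ‖w - 1/(m':ℂ)‖
            ≤ (r + 1) ^ ((Finset.Icc 1 N).erase m).card := by
              rw [← Finset.prod_const]
              apply Finset.prod_le_prod (fun m' _ => norm_nonneg _)
              intro m' hm'
              exact norm_sub_inv_le (Finset.mem_Icc.1 (Finset.mem_of_mem_erase hm')).1 hw
          _ ≤ (r + 1) ^ N := by
              apply pow_le_pow_right₀ hr1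
              calc ((Finset.Icc 1 N).erase m).card ≤ (Finset.Icc 1 N).card :=
                  Finset.card_le_card (Finset.erase_subset _ _)
                _ = N := by rw [Nat.card_Icc]; norm_num
    _ = N * (r + 1) ^ N := by
        rw [Finset.sum_const, Nat.card_Icc]
        simp [nsmul_eq_mul]

lemma P_zero {N m : ℕ} (h : m ∈ Finset.Icc 1 N) : P N (1 / (m : ℂ)) = 0 :=
  Finset.prod_eq_zero h (by simp)

lemma P_eq_zero {N : ℕ} {w : ℂ} (h : P N w = 0) : ∃ m ∈ Finset.Icc 1 N, w = 1 / (m : ℂ) := by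
  rw [P, Finset.prod_eq_zero_iff] at h
  obtain ⟨m, hm, he⟩ := h
  exact ⟨m, hm, by rwa [sub_eq_zero] at he⟩


lemma key_bound (ε : ℝ) (hε : 0 < ε) (nn : ℕ) :
    ∃ C : ℝ, 0 < C ∧ ∀ r : ℝ, 0 ≤ r →
      (r + 1) ^ nn * Real.exp (2 * Real.pi * r) ≤ C * Real.exp (r ^ (1 + ε)) := by
  set s : ℝ := (nn : ℝ) + 2 * Real.pi with hs
  have hs0 : 0 ≤ s := by positivity
  set R₀ : ℝ := max 1 ((s + 1) ^ (1 / ε)) with hR₀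
  have hR₀1 : (1:ℝ) ≤ R₀ := le_max_left _ _
  refine ⟨Real.exp (s * R₀), Real.exp_pos _, ?_⟩
  intro r hr
  have hC1 : (1:ℝ) ≤ Real.exp (s * R₀) := Real.one_le_exp (by positivity)
  have hLHS : (r + 1) ^ nn * Real.exp (2 * Real.pi * r) ≤ Real.exp (s * r) := by
    have h1 : (r + 1) ^ nn ≤ Real.exp ((nn : ℝ) * r) := by
      have h2 : r + 1 ≤ Real.exp r := by
        have := Real.add_one_le_exp r
        linarith
      calc (r + 1) ^ nn ≤ (Real.exp r) ^ nn :=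
          pow_le_pow_left₀ (by linarith) h2 nn
        _ = Real.exp ((nn : ℝ) * r) := by
            rw [← Real.exp_nat_mul]
    calc (r + 1) ^ nn * Real.exp (2 * Real.pi * r)
        ≤ Real.exp ((nn:ℝ) * r) * Real.exp (2 * Real.pi * r) :=
          mul_le_mul_of_nonneg_right h1 (Real.exp_pos _).le
      _ = Real.exp (s * r) := by rw [← Real.exp_add]; congr 1; rw [hs]; ring
  by_cases hcase : r ≤ R₀
  · calc (r + 1) ^ nn * Real.exp (2 * Real.pi * r) ≤ Real.exp (s * r) := hLHS
      _ ≤ Real.exp (s * R₀) := Real.exp_le_exp.2 (mul_le_mul_of_nonneg_left hcase hs0)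
      _ ≤ Real.exp (s * R₀) * Real.exp (r ^ (1 + ε)) := by
          nlinarith [Real.one_le_exp (Real.rpow_nonneg hr (1 + ε)), Real.exp_pos (s * R₀)]
  · push_neg at hcase
    have hr1 : (1:ℝ) ≤ r := hR₀1.trans hcase.le
    have hrpos : (0:ℝ) < r := by linarith
    have hkey : s * r ≤ r ^ (1 + ε) := by
      have ha : (((s + 1) ^ (1/ε) : ℝ)) ^ ε = s + 1 := by
        rw [← Real.rpow_mul (by positivity : (0:ℝ) ≤ s + 1), one_div_mul_cancel hε.ne',
          Real.rpow_one]
      have h1 : s + 1 ≤ r ^ ε := by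
        rw [← ha]
        exact Real.rpow_le_rpow (Real.rpow_nonneg (by positivity) _)
          ((le_max_right _ _).trans hcase.le) hε.le
      have h2 : r ^ (1 + ε) = r * r ^ ε := by
        rw [Real.rpow_add hrpos, Real.rpow_one]
      rw [h2]
      have h3 := mul_le_mul_of_nonneg_right (by linarith : s ≤ r ^ ε) hrpos.le
      linarith [h3, (by ring : r ^ ε * r = r * r ^ ε)]
    calc (r + 1) ^ nn * Real.exp (2 * Real.pi * r) ≤ Real.exp (s * r) := hLHS
      _ ≤ Real.exp (r ^ (1 + ε)) := Real.exp_le_exp.2 hkey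
      _ ≤ Real.exp (s * R₀) * Real.exp (r ^ (1 + ε)) :=
          le_mul_of_one_le_left (Real.exp_pos _).le hC1


lemma inv_nat_gap {m m' N : ℕ} (hm : m ∈ Finset.Icc 1 N) (hm' : m' ∈ Finset.Icc 1 N)
    (hne : m' ≠ m) : 1 / ((N : ℝ) ^ 2) ≤ |1 / (m' : ℝ) - 1 / (m : ℝ)| := by
  obtain ⟨hm1, hmN⟩ := Finset.mem_Icc.1 hm
  obtain ⟨hm'1, hm'N⟩ := Finset.mem_Icc.1 hm'
  have hx : (1:ℝ) ≤ (m:ℝ) := by exact_mod_cast hm1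
  have hy : (1:ℝ) ≤ (m':ℝ) := by exact_mod_cast hm'1
  have hxN : (m:ℝ) ≤ N := by exact_mod_cast hmN
  have hyN : (m':ℝ) ≤ N := by exact_mod_cast hm'N
  have hgap : (1:ℝ) ≤ |(m:ℝ) - (m':ℝ)| := by
    rcases Nat.lt_or_ge m m' with h | h
    · have : (m:ℝ) + 1 ≤ (m':ℝ) := by exact_mod_cast h
      rw [abs_sub_comm, abs_of_pos (by linarith)]
      linarith
    · rcases Nat.lt_or_ge m' m with h2 | h2
      · have : (m':ℝ) + 1 ≤ (m:ℝ) := by exact_mod_cast h2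
        rw [abs_of_pos (by linarith)]
        linarith
      · exact absurd (by omega : m' = m) hne
  have heq : 1 / (m':ℝ) - 1 / (m:ℝ) = ((m:ℝ) - (m':ℝ)) / ((m:ℝ) * (m':ℝ)) := by
    field_simp
  rw [heq, abs_div, abs_of_pos (by nlinarith : (0:ℝ) < (m:ℝ) * (m':ℝ))]
  rw [div_le_div_iff₀ (by nlinarith : (0:ℝ) < (N:ℝ)^2) (by nlinarith)]
  nlinarith [hgap, abs_nonneg ((m:ℝ) - (m':ℝ))]

end Stmt18

open Stmt18 in
set_option maxHeartbeats 1000000 in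
theorem stmt18 (ε : ℝ) (hε : 0 < ε) (n : ℕ → ℕ) (hn : ∀ i, 1 ≤ n i) :
    ∃ (f : ℂ × ℂ → ℂ × ℂ) (C : ℝ), 0 < C ∧ Differentiable ℂ f ∧
      (∀ r : ℝ, 0 ≤ r → ∀ z ∈ Metric.closedBall (0 : ℂ × ℂ) r,
        ‖f z‖ ≤ C * Real.exp (r ^ (1 + ε))) ∧
      (∀ k : ℕ, 1 ≤ k → ∃ S : Finset (ℂ × ℂ),
        (∑ i ∈ Finset.Icc 1 k, n i) ≤ S.card ∧
        ∀ z ∈ S, z ∈ Metric.closedBall (0 : ℂ × ℂ) (2 ^ k) ∧ f z = 0 ∧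
          ∃ U ∈ nhds z, ∀ w ∈ U, f w = 0 → w = z) := by
  classical
  obtain ⟨A, hA⟩ : ∃ A : ℕ → ℝ, ∀ j, 0 < A j ∧ ∀ r : ℝ, 0 ≤ r →
      (r + 1) ^ (n j) * Real.exp (2 * Real.pi * r) ≤ A j * Real.exp (r ^ (1 + ε)) := by
    choose A h1 h2 using fun j => key_bound ε hε (n j)
    exact ⟨A, fun j => ⟨h1 j, h2 j⟩⟩
  set e4 : ℝ := Real.exp (4 * Real.pi) with he4
  have he4pos : 0 < e4 := Real.exp_pos _
  set c : ℕ → ℝ := fun j => (1/2) ^ j / ((9 + 2 * (n j : ℝ)) * e4 * A j) with hc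
  have hcpos : ∀ j, 0 < c j := by
    intro j
    apply div_pos (by positivity)
    have := (hA j).1
    positivity
  set T : ℕ → ℂ × ℂ → ℂ := fun j p => ((c j : ℝ) : ℂ) * (E j p.1 * P (n j) p.2) with hTdef
  set L : ℕ → ℂ × ℂ → (ℂ × ℂ →L[ℂ] ℂ) := fun j p =>
    (((c j : ℝ) : ℂ) * (deriv (E j) p.1 * P (n j) p.2)) • (ContinuousLinearMap.fst ℂ ℂ ℂ)
    + (((c j : ℝ) : ℂ) * (E j p.1 * P' (n j) p.2)) • (ContinuousLinearMap.snd ℂ ℂ ℂ) with hLdef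
  have hc_eq : ∀ j : ℕ, c j * ((9 + 2 * (n j : ℝ)) * e4 * A j) = (1/2) ^ j := by
    intro j
    have hden : ((9 + 2 * (n j : ℝ)) * e4 * A j) ≠ 0 := by
      have := (hA j).1
      positivity
    rw [hc]
    exact div_mul_cancel₀ _ hden
  -- pointwise bound on terms
  have hTbound : ∀ (j : ℕ) (p : ℂ × ℂ) (r : ℝ), 0 ≤ r → ‖p‖ ≤ r →
      ‖T j p‖ ≤ (1/2) ^ j * Real.exp (r ^ (1 + ε)) := by
    intro j p r hr hpr
    have h1 : ‖p.1‖ ≤ r := (norm_fst_le p).trans hpr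
    have h2 : ‖p.2‖ ≤ r := (norm_snd_le p).trans hpr
    have hE : ‖E j p.1‖ ≤ 2 * e4 * Real.exp (2 * Real.pi * r) := by
      refine (Ebound j p.1).trans ?_
      rw [he4]
      have hm : Real.exp (2 * Real.pi * ‖p.1‖) ≤ Real.exp (2 * Real.pi * r) :=
        Real.exp_le_exp.2 (by nlinarith [Real.pi_pos])
      exact mul_le_mul_of_nonneg_left hm (by positivity)
    have hP : ‖P (n j) p.2‖ ≤ (r + 1) ^ (n j) := norm_P_le _ h2
    have step1 : ‖T j p‖ ≤ c j * (2 * e4 * Real.exp (2 * Real.pi * r)) * ((r + 1) ^ (n j)) := by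
      have heq2 : ‖T j p‖ = c j * (‖E j p.1‖ * ‖P (n j) p.2‖) := by
        rw [hTdef]
        simp only [norm_mul, Complex.norm_real, Real.norm_eq_abs, abs_of_pos (hcpos j)]
      rw [heq2]
      have hmm := mul_le_mul hE hP (norm_nonneg _) (by positivity)
      calc c j * (‖E j p.1‖ * ‖P (n j) p.2‖)
          ≤ c j * ((2 * e4 * Real.exp (2 * Real.pi * r)) * ((r + 1) ^ (n j))) :=
            mul_le_mul_of_nonneg_left hmm (hcpos j).le
        _ = c j * (2 * e4 * Real.exp (2 * Real.pi * r)) * ((r + 1) ^ (n j)) := by ring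
    refine step1.trans ?_
    have hX := (hA j).2 r hr
    have hAj := (hA j).1
    have hfinal : c j * (2 * e4 * Real.exp (2 * Real.pi * r)) * ((r + 1) ^ (n j))
        ≤ c j * (2 * e4) * (A j * Real.exp (r ^ (1 + ε))) := by
      have : c j * (2 * e4 * Real.exp (2 * Real.pi * r)) * ((r + 1) ^ (n j))
          = c j * (2 * e4) * ((r + 1) ^ (n j) * Real.exp (2 * Real.pi * r)) := by ring
      rw [this]
      have hcc : 0 ≤ c j * (2 * e4) := mul_nonneg (hcpos j).le (by positivity)
      exact mul_le_mul_of_nonneg_left hX hcc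
    refine hfinal.trans ?_
    have h9 : c j * (2 * e4) * A j ≤ (1/2) ^ j := by
      rw [← hc_eq j]
      have hpos : 0 ≤ (c j * e4 * A j) * (7 + 2 * (n j : ℝ)) :=
        mul_nonneg (mul_nonneg (mul_nonneg (hcpos j).le he4pos.le) hAj.le) (by positivity)
      nlinarith [hpos]
    calc c j * (2 * e4) * (A j * Real.exp (r ^ (1 + ε)))
        = (c j * (2 * e4) * A j) * Real.exp (r ^ (1 + ε)) := by ring
      _ ≤ (1/2) ^ j * Real.exp (r ^ (1 + ε)) :=
          mul_le_mul_of_nonneg_right h9 (Real.exp_pos _).le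
  -- derivative facts
  have hL : ∀ (j : ℕ) (p : ℂ × ℂ), HasFDerivAt (T j) (L j p) p := by
    intro j p
    have h1 : HasFDerivAt (fun q : ℂ × ℂ => E j q.1)
        ((deriv (E j) p.1) • (ContinuousLinearMap.fst ℂ ℂ ℂ)) p :=
      ((hE_diff j p.1).hasDerivAt).comp_hasFDerivAt p hasFDerivAt_fst
    have h2 : HasFDerivAt (fun q : ℂ × ℂ => P (n j) q.2)
        ((P' (n j) p.2) • (ContinuousLinearMap.snd ℂ ℂ ℂ)) p :=
      (hP_hasDeriv (n j) p.2).comp_hasFDerivAt p hasFDerivAt_snd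
    have h3 := (h1.mul h2).const_mul (((c j : ℝ)) : ℂ)
    have heq : (((c j : ℝ) : ℂ)) • ((fun q : ℂ × ℂ => E j q.1) p •
          ((P' (n j) p.2) • (ContinuousLinearMap.snd ℂ ℂ ℂ))
        + (fun q : ℂ × ℂ => P (n j) q.2) p •
          ((deriv (E j) p.1) • (ContinuousLinearMap.fst ℂ ℂ ℂ))) = L j p := by
      rw [hLdef]
      refine ContinuousLinearMap.ext fun v => ?_
      simp only [ContinuousLinearMap.add_apply, ContinuousLinearMap.coe_smul',
        Pi.smul_apply, ContinuousLinearMap.coe_fst', ContinuousLinearMap.coe_snd',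
        smul_eq_mul]
      ring
    rw [hTdef]
    simpa only [heq, Pi.mul_apply] using h3
  have hLbound : ∀ (j : ℕ) (p : ℂ × ℂ) (r : ℝ), 0 ≤ r → ‖p‖ ≤ r →
      ‖L j p‖ ≤ (1/2) ^ j * Real.exp (r ^ (1 + ε)) := by
    intro j p r hr hpr
    have h1 : ‖p.1‖ ≤ r := (norm_fst_le p).trans hpr
    have h2 : ‖p.2‖ ≤ r := (norm_snd_le p).trans hpr
    have hexpm : Real.exp (2 * Real.pi * ‖p.1‖) ≤ Real.exp (2 * Real.pi * r) :=
      Real.exp_le_exp.2 (by nlinarith [Real.pi_pos])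
    have hE : ‖E j p.1‖ ≤ 2 * e4 * Real.exp (2 * Real.pi * r) := by
      refine (Ebound j p.1).trans ?_
      rw [he4]
      exact mul_le_mul_of_nonneg_left hexpm (by positivity)
    have hE' : ‖deriv (E j) p.1‖ ≤ 9 * e4 * Real.exp (2 * Real.pi * r) := by
      refine (E'bound j p.1).trans ?_
      rw [he4]
      exact mul_le_mul_of_nonneg_left hexpm (by positivity)
    have hP : ‖P (n j) p.2‖ ≤ (r + 1) ^ (n j) := norm_P_le _ h2
    have hP' : ‖P' (n j) p.2‖ ≤ (n j : ℝ) * (r + 1) ^ (n j) := norm_P'_le _ hr h2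
    apply ContinuousLinearMap.opNorm_le_bound _ (by positivity)
    intro v
    have hv1 : ‖v.1‖ ≤ ‖v‖ := norm_fst_le v
    have hv2 : ‖v.2‖ ≤ ‖v‖ := norm_snd_le v
    have happ : (L j p) v = ((c j : ℝ) : ℂ) * (deriv (E j) p.1 * P (n j) p.2) * v.1
        + ((c j : ℝ) : ℂ) * (E j p.1 * P' (n j) p.2) * v.2 := by
      rw [hLdef]
      simp only [ContinuousLinearMap.add_apply, ContinuousLinearMap.coe_smul',
        Pi.smul_apply, ContinuousLinearMap.coe_fst', ContinuousLinearMap.coe_snd',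
        smul_eq_mul]
    set X := (r + 1) ^ (n j) * Real.exp (2 * Real.pi * r) with hX
    have hX0 : 0 ≤ X := by positivity
    have hXA : X ≤ A j * Real.exp (r ^ (1 + ε)) := (hA j).2 r hr
    have hnorm1 : ‖((c j : ℝ) : ℂ) * (deriv (E j) p.1 * P (n j) p.2)‖ ≤ c j * (9 * e4 * X) := by
      rw [norm_mul, norm_mul, Complex.norm_real, Real.norm_eq_abs, abs_of_pos (hcpos j), hX]
      have := mul_le_mul hE' hP (norm_nonneg _) (by positivity)
      calc c j * (‖deriv (E j) p.1‖ * ‖P (n j) p.2‖)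
          ≤ c j * ((9 * e4 * Real.exp (2 * Real.pi * r)) * (r + 1) ^ (n j)) :=
            mul_le_mul_of_nonneg_left this (hcpos j).le
        _ = c j * (9 * e4 * ((r + 1) ^ (n j) * Real.exp (2 * Real.pi * r))) := by ring
    have hnorm2 : ‖((c j : ℝ) : ℂ) * (E j p.1 * P' (n j) p.2)‖
        ≤ c j * (2 * (n j : ℝ) * e4 * X) := by
      rw [norm_mul, norm_mul, Complex.norm_real, Real.norm_eq_abs, abs_of_pos (hcpos j), hX]
      have := mul_le_mul hE hP' (norm_nonneg _) (by positivity)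
      calc c j * (‖E j p.1‖ * ‖P' (n j) p.2‖)
          ≤ c j * ((2 * e4 * Real.exp (2 * Real.pi * r)) * ((n j : ℝ) * (r + 1) ^ (n j))) :=
            mul_le_mul_of_nonneg_left this (hcpos j).le
        _ = c j * (2 * (n j : ℝ) * e4 * ((r + 1) ^ (n j) * Real.exp (2 * Real.pi * r))) := by
            ring
    have htotal : ‖(L j p) v‖ ≤ (c j * ((9 + 2 * (n j : ℝ)) * e4) * X) * ‖v‖ := by
      rw [happ]
      calc ‖_ + _‖ ≤ ‖((c j : ℝ) : ℂ) * (deriv (E j) p.1 * P (n j) p.2) * v.1‖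
            + ‖((c j : ℝ) : ℂ) * (E j p.1 * P' (n j) p.2) * v.2‖ := norm_add_le _ _
        _ ≤ (c j * (9 * e4 * X)) * ‖v‖ + (c j * (2 * (n j : ℝ) * e4 * X)) * ‖v‖ := by
            rw [norm_mul (((c j : ℝ) : ℂ) * (deriv (E j) p.1 * P (n j) p.2)) v.1,
              norm_mul (((c j : ℝ) : ℂ) * (E j p.1 * P' (n j) p.2)) v.2]
            have hn1 : (0:ℝ) ≤ c j * (9 * e4 * X) :=
              mul_nonneg (hcpos j).le (mul_nonneg (mul_nonneg (by norm_num) he4pos.le) hX0)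
            have hn2 : (0:ℝ) ≤ c j * (2 * (n j : ℝ) * e4 * X) :=
              mul_nonneg (hcpos j).le
                (mul_nonneg (mul_nonneg (mul_nonneg (by norm_num) (Nat.cast_nonneg _)) he4pos.le)
                  hX0)
            have t1 := mul_le_mul hnorm1 hv1 (norm_nonneg _) hn1
            have t2 := mul_le_mul hnorm2 hv2 (norm_nonneg _) hn2
            exact add_le_add t1 t2
        _ = (c j * ((9 + 2 * (n j : ℝ)) * e4) * X) * ‖v‖ := by ring
    refine htotal.trans ?_
    apply mul_le_mul_of_nonneg_right _ (norm_nonneg v)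
    have hAj := (hA j).1
    calc c j * ((9 + 2 * (n j : ℝ)) * e4) * X
        ≤ c j * ((9 + 2 * (n j : ℝ)) * e4) * (A j * Real.exp (r ^ (1 + ε))) := by
          apply mul_le_mul_of_nonneg_left hXA
          have : (0:ℝ) ≤ 9 + 2 * (n j : ℝ) := by positivity
          exact mul_nonneg (hcpos j).le (mul_nonneg this he4pos.le)
      _ = (c j * ((9 + 2 * (n j : ℝ)) * e4 * A j)) * Real.exp (r ^ (1 + ε)) := by ring
      _ = (1/2) ^ j * Real.exp (r ^ (1 + ε)) := by rw [hc_eq j]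
  -- summability at any point
  have hsummable : ∀ p : ℂ × ℂ, Summable (fun j => T j p) := by
    intro p
    apply Summable.of_norm_bounded (g := fun j => (1/2) ^ j * Real.exp (‖p‖ ^ (1 + ε)))
      (summable_geometric_two.mul_right _)
    intro j
    exact hTbound j p ‖p‖ (norm_nonneg p) le_rfl
  set f2 : ℂ × ℂ → ℂ := fun p => ∑' j, T j p with hf2def
  have hf2diff : ∀ p : ℂ × ℂ, DifferentiableAt ℂ f2 p := by
    intro p
    set R : ℝ := ‖p‖ + 1 with hR
    have hR0 : 0 ≤ R := by positivity
    have h := hasFDerivAt_tsum_of_isPreconnected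
      (u := fun j => (1/2) ^ j * Real.exp (R ^ (1 + ε)))
      (f := T) (f' := L)
      (summable_geometric_two.mul_right _)
      Metric.isOpen_ball
      ((convex_ball (0 : ℂ × ℂ) R).isPreconnected)
      (fun j x _ => hL j x)
      (fun j x hx => hLbound j x R hR0 (by
        rw [mem_ball_zero_iff] at hx
        exact hx.le))
      (x₀ := 0) (by simp [mem_ball_zero_iff]; positivity)
      (hsummable 0)
      (x := p) (by rw [mem_ball_zero_iff]; simp [hR])
    exact h.differentiableAt
  set f : ℂ × ℂ → ℂ × ℂ := fun p => (g p.1, f2 p) with hfdef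
  have hfdiff : Differentiable ℂ f := by
    intro p
    apply DifferentiableAt.prodMk
    · exact (hg_diff p.1).comp p differentiable_fst.differentiableAt
    · exact hf2diff p
  -- growth bound
  obtain ⟨C₁, hC₁pos, hC₁⟩ := key_bound ε hε 0
  have hgrowth : ∀ r : ℝ, 0 ≤ r → ∀ p ∈ Metric.closedBall (0 : ℂ × ℂ) r,
      ‖f p‖ ≤ (2 * C₁ + 2) * Real.exp (r ^ (1 + ε)) := by
    intro r hr p hp
    rw [Metric.mem_closedBall, dist_zero_right] at hp
    have h1 : ‖g p.1‖ ≤ (2 * C₁ + 2) * Real.exp (r ^ (1 + ε)) := by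
      have ha := norm_g_le p.1
      have hb : Real.exp (2 * Real.pi * ‖p.1‖) ≤ Real.exp (2 * Real.pi * r) := by
        apply Real.exp_le_exp.2
        have := (norm_fst_le p).trans hp
        nlinarith [Real.pi_pos]
      have hcc := hC₁ r hr
      simp only [pow_zero, one_mul] at hcc
      have := Real.exp_pos (r ^ (1 + ε))
      nlinarith
    have h2 : ‖f2 p‖ ≤ (2 * C₁ + 2) * Real.exp (r ^ (1 + ε)) := by
      have hs : Summable (fun j => ‖T j p‖) := by
        apply Summable.of_nonneg_of_le (fun j => norm_nonneg _)
          (fun j => hTbound j p r hr hp)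
        exact summable_geometric_two.mul_right _
      calc ‖f2 p‖ ≤ ∑' j, ‖T j p‖ := norm_tsum_le_tsum_norm hs
        _ ≤ ∑' j : ℕ, (1/2) ^ j * Real.exp (r ^ (1 + ε)) :=
            Summable.tsum_le_tsum (fun j => hTbound j p r hr hp) hs
              (summable_geometric_two.mul_right _)
        _ = 2 * Real.exp (r ^ (1 + ε)) := by
            rw [tsum_mul_right, tsum_geometric_two]
        _ ≤ (2 * C₁ + 2) * Real.exp (r ^ (1 + ε)) := by
            nlinarith [Real.exp_pos (r ^ (1 + ε)), hC₁pos]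
    rw [hfdef]
    rw [Prod.norm_def]
    exact max_le h1 h2
  refine ⟨f, 2 * C₁ + 2, by positivity, hfdiff, hgrowth, ?_⟩
  intro k hk
  set S : Finset (ℂ × ℂ) := (Finset.Icc 1 k).biUnion (fun j =>
    (Finset.Icc 1 (n j)).image (fun m : ℕ => ((a j), (1 / (m : ℂ))))) with hSdef
  have hinj : ∀ j : ℕ, Function.Injective (fun m : ℕ => ((a j), (1 / (m : ℂ)))) := by
    intro j m m' h
    simp only [Prod.mk.injEq] at h
    have h2 : ((m : ℂ))⁻¹ = ((m' : ℂ))⁻¹ := by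
      simpa [one_div] using h.2
    exact Nat.cast_injective (inv_injective h2)
  have hcard : (∑ i ∈ Finset.Icc 1 k, n i) ≤ S.card := by
    rw [hSdef, Finset.card_biUnion]
    · apply le_of_eq
      apply Finset.sum_congr rfl
      intro j _
      rw [Finset.card_image_of_injective _ (hinj j), Nat.card_Icc]
      omega
    · intro j hj j' hj' hjj
      rw [Function.onFun, Finset.disjoint_left]
      intro x hx hx'
      obtain ⟨m, _, hmx⟩ := Finset.mem_image.1 hx
      obtain ⟨m', _, hmx'⟩ := Finset.mem_image.1 hx'
      apply hjj
      apply a_inj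
      rw [← hmx] at hmx'
      exact (congrArg Prod.fst hmx').symm
  refine ⟨S, hcard, ?_⟩
  intro z hz
  rw [hSdef, Finset.mem_biUnion] at hz
  obtain ⟨j, hjIcc, hz⟩ := hz
  obtain ⟨m, hmIcc, hmeq⟩ := Finset.mem_image.1 hz
  obtain ⟨hj1, hjk⟩ := Finset.mem_Icc.1 hjIcc
  obtain ⟨hm1, hmn⟩ := Finset.mem_Icc.1 hmIcc
  subst hmeq
  have hm_norm : ‖(1 : ℂ) / (m : ℂ)‖ ≤ 1 := by
    rw [norm_div, norm_one]
    rw [div_le_one (by exact_mod_cast Nat.cast_pos.2 hm1 : (0:ℝ) < ‖(m:ℂ)‖)]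
    simp only [Complex.norm_natCast]
    exact_mod_cast hm1
  refine ⟨?_, ?_, ?_⟩
  · -- membership in the ball
    rw [Metric.mem_closedBall, dist_zero_right, Prod.norm_def]
    have hk2 : (k : ℝ) ≤ 2 ^ k := by
      have := Nat.lt_two_pow_self (n := k)
      have h2 : (k : ℝ) < ((2 ^ k : ℕ) : ℝ) := by exact_mod_cast this
      push_cast at h2
      linarith
    have h12 : (1 : ℝ) ≤ 2 ^ k := one_le_pow₀ (by norm_num)
    apply max_le
    · rw [norm_a]
      have : (j : ℝ) ≤ (k : ℝ) := by exact_mod_cast hjk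
      linarith
    · exact hm_norm.trans h12
  · -- f vanishes
    have hall : ∀ j', T j' ((a j), 1 / (m : ℂ)) = 0 := by
      intro j'
      by_cases hjj : j' = j
      · subst hjj
        simp only [hTdef]
        rw [P_zero hmIcc, mul_zero, mul_zero]
      · simp only [hTdef]
        rw [E_vanish (fun hh => hjj hh.symm), zero_mul, mul_zero]
    have hf2z : f2 ((a j), 1 / (m : ℂ)) = 0 := by
      rw [hf2def]
      simp only
      rw [tsum_congr hall, tsum_zero]
    rw [hfdef]
    simp only
    rw [Prod.mk_eq_zero]
    exact ⟨g_a j, hf2z⟩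
  · -- isolated
    set δ : ℝ := min (1/2) (1 / (((n j) : ℝ) ^ 2 + 1)) with hδdef
    have hnj1 : (1:ℝ) ≤ ((n j) : ℝ) := by exact_mod_cast hn j
    have hδpos : 0 < δ := by
      apply lt_min (by norm_num)
      positivity
    refine ⟨Metric.ball ((a j), 1 / (m : ℂ)) δ, Metric.ball_mem_nhds _ hδpos, ?_⟩
    intro w hw hfw
    rw [Metric.mem_ball, dist_eq_norm] at hw
    have hw1d : ‖w.1 - a j‖ < δ := lt_of_le_of_lt (norm_fst_le (w - ((a j), 1 / (m : ℂ)))) hw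
    have hw2d : ‖w.2 - 1 / (m : ℂ)‖ < δ := lt_of_le_of_lt (norm_snd_le (w - ((a j), 1 / (m : ℂ)))) hw
    rw [hfdef] at hfw
    simp only at hfw
    rw [Prod.mk_eq_zero] at hfw
    obtain ⟨hgw, hf2w⟩ := hfw
    -- from the first equation, w.1 = a j
    have hexp1 : Complex.exp ((2 * Real.pi) * w.1) = 1 := by
      have := sub_eq_zero.1 hgw
      exact this
    obtain ⟨l, hl⟩ := Complex.exp_eq_one_iff.1 hexp1
    have h2πne : ((2 * Real.pi : ℝ) : ℂ) ≠ 0 := by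
      simp only [Complex.ofReal_ne_zero]
      positivity
    have hw1 : w.1 = (l : ℂ) * Complex.I := by
      apply mul_left_cancel₀ (show ((2 * Real.pi : ℝ) : ℂ) ≠ 0 from h2πne)
      rw [show (((2 * Real.pi : ℝ) : ℂ)) * ((l : ℂ) * Complex.I)
          = (l : ℂ) * (2 * (Real.pi : ℂ) * Complex.I) by push_cast; ring]
      rw [← hl]
      push_cast
      ring
    have hlj : l = (j : ℤ) := by
      have hdd : ‖w.1 - a j‖ = |((l - (j : ℤ) : ℤ) : ℝ)| := by
        rw [hw1, a]
        have : (l : ℂ) * Complex.I - (j : ℂ) * Complex.I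
            = (((l - (j : ℤ) : ℤ) : ℝ) : ℂ) * Complex.I := by push_cast; ring
        rw [this, norm_mul, Complex.norm_I, mul_one, Complex.norm_real, Real.norm_eq_abs]
      have habs : |((l - (j : ℤ) : ℤ) : ℝ)| < 1 := by
        have hδhalf : δ ≤ 1/2 := min_le_left _ _
        rw [← hdd]
        linarith
      have : |l - (j : ℤ)| < 1 := by
        rwa [show |((l - (j : ℤ) : ℤ) : ℝ)| = ((|l - (j : ℤ)| : ℤ) : ℝ) by
          rw [Int.cast_abs], show ((1:ℝ)) = ((1:ℤ):ℝ) by norm_num, Int.cast_lt] at habs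
      rw [abs_lt] at this
      omega
    have hw1a : w.1 = a j := by
      rw [hw1, hlj, a]
      push_cast
      ring
    -- from the second equation, w.2 is a root of P (n j)
    have hsingle : f2 w = T j w := by
      rw [hf2def]
      simp only
      apply tsum_eq_single
      intro j' hjj
      simp only [hTdef]
      rw [hw1a, E_vanish hjj.symm, zero_mul, mul_zero]
    have hPz : P (n j) w.2 = 0 := by
      have h0 : T j w = 0 := by rw [← hsingle]; exact hf2w
      simp only [hTdef] at h0
      rw [hw1a, E_self] at h0
      have hcne : (((c j : ℝ)) : ℂ) ≠ 0 := Complex.ofReal_ne_zero.2 (hcpos j).ne'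
      have h2πcne : ((2 : ℂ) * (Real.pi : ℂ)) ≠ 0 :=
        mul_ne_zero two_ne_zero (Complex.ofReal_ne_zero.2 Real.pi_ne_zero)
      rcases mul_eq_zero.1 h0 with h | h
      · exact absurd h hcne
      · rcases mul_eq_zero.1 h with h | h
        · exact absurd h h2πcne
        · exact h
    obtain ⟨m', hm'Icc, hwm'⟩ := P_eq_zero hPz
    have hmm : m' = m := by
      by_contra hne
      have hgap := inv_nat_gap hmIcc hm'Icc hne
      have hdist : ‖w.2 - 1 / (m : ℂ)‖ = |1 / (m' : ℝ) - 1 / (m : ℝ)| := by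
        rw [hwm']
        rw [show (1 / (m' : ℂ) - 1 / (m : ℂ)) = (((1 / (m' : ℝ) - 1 / (m : ℝ)) : ℝ) : ℂ) by
          push_cast; ring]
        rw [Complex.norm_real, Real.norm_eq_abs]
      have hδ2 : δ ≤ 1 / (((n j) : ℝ) ^ 2 + 1) := min_le_right _ _
      have hlt : 1 / (((n j) : ℝ) ^ 2 + 1) < 1 / (((n j) : ℝ) ^ 2) := by
        apply div_lt_div_of_pos_left one_pos (by positivity)
        linarith
      rw [hdist] at hw2d
      linarith
    rw [hmm] at hwm'
    exact Prod.ext hw1a hwm'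
end
end
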